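/- Assume the users are indexed in nondecreasing order of deadlines, i.e. d 1 ≤ d 2 ≤ … ≤ d U. Let u be a user, let S be a feasible set of users all with index strictly less than u, and let ℓ be any element of S ∪ {u} of maximum processing requirement, i.e. ν ℓ = max{ν i : i ∈ S ∪ {u}}. Then (S ∪ {u}) \ {ℓ} is feasible. (Lemma 3 of the paper: the schedule produced after the exchange/rescheduling step remains feasible.) -/

import Mathlib

/-- A schedule `σ : ℕ → Option (Fin U)` serves the user set `S`:
(i) the users appearing in slots `{1,…,T}` are exactly those of `S`;
(ii) each `u ∈ S` appears in exactly `ν u` slots;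
(iii) every slot at which a user `u` appears is at most `d u`;
(iv) for every `t ∈ {1,…,T}`, the number of busy slots in `{1,…,t}` is at most
`∑_{s=1}^{t} A s`. -/
def Serves (T U : ℕ) (ν d : Fin U → ℕ) (A : ℕ → ℕ)
    (σ : ℕ → Option (Fin U)) (S : Finset (Fin U)) : Prop :=
  (∀ u : Fin U, u ∈ S ↔ ∃ t ∈ Finset.Icc 1 T, σ t = some u) ∧
  (∀ u ∈ S, ((Finset.Icc 1 T).filter (fun t => σ t = some u)).card = ν u) ∧
  (∀ u : Fin U, ∀ t ∈ Finset.Icc 1 T, σ t = some u → t ≤ d u) ∧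
  (∀ t ∈ Finset.Icc 1 T,
    ((Finset.Icc 1 t).filter (fun s => σ s ≠ none)).card ≤ ∑ s ∈ Finset.Icc 1 t, A s)

/-- A user set is feasible if some schedule serves it. -/
def Feasible (T U : ℕ) (ν d : Fin U → ℕ) (A : ℕ → ℕ) (S : Finset (Fin U)) : Prop :=
  ∃ σ : ℕ → Option (Fin U), Serves T U ν d A σ S

/-- Lemma 3: if `S` is a feasible set of users all with index strictly less than `u`
(users being indexed in nondecreasing order of deadlines), and `ℓ` is an element of
`S ∪ {u}` of maximum processing requirement, then `(S ∪ {u}) \ {ℓ}` is feasible. -/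
theorem stmt0 (T U : ℕ) (ν d : Fin U → ℕ) (A : ℕ → ℕ)
    (hν : ∀ i, 1 ≤ ν i) (hd : ∀ i, d i ∈ Finset.Icc 1 T)
    (hsort : Monotone d)
    (u : Fin U) (S : Finset (Fin U)) (hSlt : ∀ i ∈ S, i < u)
    (hfeas : Feasible T U ν d A S)
    (ℓ : Fin U) (hℓmem : ℓ ∈ insert u S)
    (hℓmax : ∀ i ∈ insert u S, ν i ≤ ν ℓ) :
    Feasible T U ν d A ((insert u S).erase ℓ) := by
  obtain ⟨σ, hσ1, hσ2, hσ3, hσ4⟩ := hfeas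
  have huS : u ∉ S := fun h => absurd (hSlt u h) (lt_irrefl u)
  rcases Finset.mem_insert.mp hℓmem with hℓu | hℓS
  · subst hℓu
    rw [Finset.erase_insert huS]
    exact ⟨σ, hσ1, hσ2, hσ3, hσ4⟩
  · have hℓlt : ℓ < u := hSlt ℓ hℓS
    have hℓne : ℓ ≠ u := ne_of_lt hℓlt
    have hdle : d ℓ ≤ d u := hsort hℓlt.le
    rw [Finset.erase_insert_of_ne hℓne.symm]
    have hFcard : ((Finset.Icc 1 T).filter (fun t => σ t = some ℓ)).card = ν ℓ :=
      hσ2 ℓ hℓS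
    have hνle : ν u ≤ ((Finset.Icc 1 T).filter (fun t => σ t = some ℓ)).card := by
      rw [hFcard]; exact hℓmax u (Finset.mem_insert_self u S)
    obtain ⟨G, hGF, hGcard⟩ := Finset.exists_subset_card_eq hνle
    have hGmem : ∀ t ∈ G, t ∈ Finset.Icc 1 T ∧ σ t = some ℓ := by
      intro t ht
      exact Finset.mem_filter.mp (hGF ht)
    classical
    refine ⟨fun t => if t ∈ G then some u else if σ t = some ℓ then none else σ t,
      ?_, ?_, ?_, ?_⟩
    · intro v
      constructor
      · intro hv
        rcases Finset.mem_insert.mp hv with rfl | hvS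
        · have hGne : G.Nonempty := by
            rw [← Finset.card_pos, hGcard]; exact hν _
          obtain ⟨t, ht⟩ := hGne
          exact ⟨t, (hGmem t ht).1, by simp [ht]⟩
        · have hvS' := Finset.mem_of_mem_erase hvS
          have hvℓ : v ≠ ℓ := Finset.ne_of_mem_erase hvS
          obtain ⟨t, htT, hσt⟩ := (hσ1 v).mp hvS'
          have htG : t ∉ G := by
            intro h
            have := (hGmem t h).2
            rw [hσt] at this
            exact hvℓ (Option.some_injective _ this)
          refine ⟨t, htT, ?_⟩
          simp only [if_neg htG]
          rw [if_neg (by rw [hσt]; simp [hvℓ])]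
          exact hσt
      · rintro ⟨t, htT, hσt⟩
        by_cases htG : t ∈ G
        · simp only [if_pos htG] at hσt
          have : v = u := (Option.some_injective _ hσt).symm
          subst this
          exact Finset.mem_insert_self _ _
        · simp only [if_neg htG] at hσt
          by_cases hℓt : σ t = some ℓ
          · rw [if_pos hℓt] at hσt; exact absurd hσt (by simp)
          · rw [if_neg hℓt] at hσt
            have hvS : v ∈ S := (hσ1 v).mpr ⟨t, htT, hσt⟩
            have hvℓ : v ≠ ℓ := by rintro rfl; exact hℓt hσt
            exact Finset.mem_insert_of_mem (Finset.mem_erase.mpr ⟨hvℓ, hvS⟩)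
    · intro v hv
      rcases Finset.mem_insert.mp hv with rfl | hvS
      · have hfil : (Finset.Icc 1 T).filter
            (fun t => (if t ∈ G then some v else if σ t = some ℓ then none else σ t)
              = some v) = G := by
          ext t
          simp only [Finset.mem_filter]
          constructor
          · rintro ⟨htT, hσt⟩
            by_contra htG
            rw [if_neg htG] at hσt
            by_cases hℓt : σ t = some ℓ
            · rw [if_pos hℓt] at hσt; exact absurd hσt (by simp)
            · rw [if_neg hℓt] at hσt
              exact huS ((hσ1 v).mpr ⟨t, htT, hσt⟩)
          · intro htG
            exact ⟨(hGmem t htG).1, by simp [htG]⟩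
        rw [hfil, hGcard]
      · have hvS' := Finset.mem_of_mem_erase hvS
        have hvℓ : v ≠ ℓ := Finset.ne_of_mem_erase hvS
        have hvu : v ≠ u := ne_of_lt (hSlt v hvS')
        have hfil : (Finset.Icc 1 T).filter
            (fun t => (if t ∈ G then some u else if σ t = some ℓ then none else σ t)
              = some v) = (Finset.Icc 1 T).filter (fun t => σ t = some v) := by
          ext t
          simp only [Finset.mem_filter]
          constructor
          · rintro ⟨htT, hσt⟩
            refine ⟨htT, ?_⟩
            by_cases htG : t ∈ G
            · rw [if_pos htG] at hσt
              exact absurd (Option.some_injective _ hσt) hvu.symm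
            · rw [if_neg htG] at hσt
              by_cases hℓt : σ t = some ℓ
              · rw [if_pos hℓt] at hσt; exact absurd hσt (by simp)
              · rwa [if_neg hℓt] at hσt
          · rintro ⟨htT, hσt⟩
            refine ⟨htT, ?_⟩
            have htG : t ∉ G := by
              intro h
              have := (hGmem t h).2
              rw [hσt] at this
              exact hvℓ (Option.some_injective _ this)
            rw [if_neg htG, if_neg (by rw [hσt]; simp [hvℓ])]
            exact hσt
        rw [hfil]
        exact hσ2 v hvS'
    · intro v t htT hσt
      by_cases htG : t ∈ G
      · simp only [if_pos htG] at hσt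
        have hvu : v = u := (Option.some_injective _ hσt).symm
        subst hvu
        have := hσ3 ℓ t (hGmem t htG).1 (hGmem t htG).2
        exact this.trans hdle
      · simp only [if_neg htG] at hσt
        by_cases hℓt : σ t = some ℓ
        · rw [if_pos hℓt] at hσt; exact absurd hσt (by simp)
        · rw [if_neg hℓt] at hσt
          exact hσ3 v t htT hσt
    · intro t htT
      refine le_trans (Finset.card_le_card ?_) (hσ4 t htT)
      intro s hs
      simp only [Finset.mem_filter] at hs ⊢
      refine ⟨hs.1, ?_⟩
      rcases hs with ⟨hsT, hsne⟩
      by_cases hsG : s ∈ G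
      · rw [(hGmem s hsG).2]; simp
      · rw [if_neg hsG] at hsne
        by_cases hℓs : σ s = some ℓ
        · rw [if_pos hℓs] at hsne; exact absurd rfl hsne
        · rwa [if_neg hℓs] at hsne
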